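/- Let f ∈ C(∂U) and let G ∈ C(K) be the unique function with Φ(G_U) = G_U and G = f on ∂U. If F ∈ C(K) is any continuous extension of f to K, then the sequence {Φ^n(F_U)}_{n≥1} converges uniformly on U to G_U. -/

import Mathlib

open MeasureTheory Filter Topology ComplexOrder

/-- `Φ` is a Markov operator on the bounded Borel measurable functions on `U`:
for each `x` there is a Borel probability measure `P x` representing `Φ` at `x`. -/
def IsMarkovOperator {U : Type*} [MeasurableSpace U]
    (Φ : (U → ℂ) → (U → ℂ)) : Prop :=
  ∀ x : U, ∃ P : Measure U, IsProbabilityMeasure P ∧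
    ∀ f : U → ℂ, Measurable f → (∃ C : ℝ, ∀ y, ‖f y‖ ≤ C) →
      Φ f x = ∫ y, f y ∂P

/-- `Φ` has the strong Feller property: it maps bounded Borel measurable
functions to continuous functions. -/
def HasStrongFeller {U : Type*} [MeasurableSpace U] [TopologicalSpace U]
    (Φ : (U → ℂ) → (U → ℂ)) : Prop :=
  ∀ f : U → ℂ, Measurable f → (∃ C : ℝ, ∀ y, ‖f y‖ ≤ C) → Continuous (Φ f)

/-- Boundary condition (A): for each boundary point `x` there is a barrier
`h ∈ C(K)` with `h x = 0`, `h < 0` off `x`, and `Φ (h_U) ≥ h_U` on `U`. -/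
def CondA {K : Type*} [TopologicalSpace K] (U : Set K)
    (Φ : (↥U → ℂ) → (↥U → ℂ)) : Prop :=
  ∀ x ∈ Uᶜ, ∃ h : C(K, ℂ), h x = 0 ∧ (∀ y : K, y ≠ x → h y < 0) ∧
    ∀ u : ↥U, h u.1 ≤ Φ (fun v : ↥U => h v.1) u

/-- Maximum principle (B): every real-valued `g ∈ C(K)` with `Φ (g_U) ≥ g_U`
on `U` attaining its global maximum inside `U` is constant. -/
def CondB {K : Type*} [TopologicalSpace K] (U : Set K)
    (Φ : (↥U → ℂ) → (↥U → ℂ)) : Prop :=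
  ∀ g : C(K, ℂ), (∀ x : K, (g x).im = 0) →
    (∀ u : ↥U, g u.1 ≤ Φ (fun v : ↥U => g v.1) u) →
    (∃ z ∈ U, ∀ x : K, g x ≤ g z) →
    ∀ x y : K, g x = g y

/-- The map `Ψ` : `Ψ f = Φ (f_U)` on `U` and `Ψ f = f` on `∂U = K \ U`. -/
noncomputable def psiFun {K : Type*} (U : Set K)
    (Φ : (↥U → ℂ) → (↥U → ℂ)) (f : K → ℂ) : K → ℂ :=
  open Classical in fun x => if hx : x ∈ U then Φ (fun v : ↥U => f v.1) ⟨x, hx⟩ else f x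

/-! ### Auxiliary machinery for Markov operators -/

section MarkovAux

variable {X : Type*} [MeasurableSpace X]

lemma integral_cpx_ofReal (μ : Measure X) (f : X → ℝ) :
    ∫ x, (f x : ℂ) ∂μ = ((∫ x, f x ∂μ : ℝ) : ℂ) := integral_ofReal

/-- Bounded measurable complex functions. -/
def GoodC (f : X → ℂ) : Prop := Measurable f ∧ ∃ C : ℝ, ∀ y, ‖f y‖ ≤ C

/-- Bounded measurable real functions. -/
def GoodR (g : X → ℝ) : Prop := Measurable g ∧ ∃ C : ℝ, ∀ y, |g y| ≤ C

/-- The real version of a Markov operator. -/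
noncomputable def TR (Φ : (X → ℂ) → (X → ℂ)) (g : X → ℝ) : X → ℝ :=
  fun x => (Φ (fun y => (g y : ℂ)) x).re

variable {Φ : (X → ℂ) → (X → ℂ)}

lemma GoodR.coe {g : X → ℝ} (hg : GoodR g) : GoodC (fun y => (g y : ℂ)) := by
  obtain ⟨hm, C, hC⟩ := hg
  exact ⟨Complex.measurable_ofReal.comp hm, C, fun y => by simpa using hC y⟩

lemma GoodC.integrable {f : X → ℂ} (hf : GoodC f) (P : Measure X)
    [IsProbabilityMeasure P] : Integrable f P := by
  obtain ⟨hm, C, hC⟩ := hf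
  exact ⟨hm.aestronglyMeasurable, HasFiniteIntegral.of_bounded (C := C)
    (Eventually.of_forall hC)⟩

lemma GoodR.integrable {g : X → ℝ} (hg : GoodR g) (P : Measure X)
    [IsProbabilityMeasure P] : Integrable g P := by
  obtain ⟨hm, C, hC⟩ := hg
  exact ⟨hm.aestronglyMeasurable, HasFiniteIntegral.of_bounded (C := C)
    (Eventually.of_forall (by simpa using hC))⟩

/-- Representation of `TR` as an integral, tied to a representation of `Φ`. -/
lemma TR_repr (hM : IsMarkovOperator Φ) {g : X → ℝ} (hg : GoodR g) (x : X) :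
    ∃ P : Measure X, IsProbabilityMeasure P ∧
      (∀ f : X → ℂ, Measurable f → (∃ C : ℝ, ∀ y, ‖f y‖ ≤ C) → Φ f x = ∫ y, f y ∂P) ∧
      TR Φ g x = ∫ y, g y ∂P := by
  obtain ⟨P, hP, hrep⟩ := hM x
  refine ⟨P, hP, hrep, ?_⟩
  have h1 : Φ (fun y => (g y : ℂ)) x = ∫ y, (g y : ℂ) ∂P :=
    hrep _ hg.coe.1 hg.coe.2
  rw [TR, h1, integral_cpx_ofReal, Complex.ofReal_re]

lemma TR_coe (hM : IsMarkovOperator Φ) {g : X → ℝ} (hg : GoodR g) :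
    Φ (fun y => (g y : ℂ)) = fun x => ((TR Φ g x : ℝ) : ℂ) := by
  funext x
  obtain ⟨P, hP, hrep, hTR⟩ := TR_repr hM hg x
  rw [hrep _ hg.coe.1 hg.coe.2, hTR, integral_cpx_ofReal]

lemma TR_bound (hM : IsMarkovOperator Φ) {g : X → ℝ} (hg : GoodR g) {C : ℝ}
    (hC : ∀ y, |g y| ≤ C) (x : X) : |TR Φ g x| ≤ C := by
  obtain ⟨P, hP, _, hTR⟩ := TR_repr hM hg x
  rw [hTR, ← Real.norm_eq_abs]
  calc ‖∫ y, g y ∂P‖ ≤ C * (P Set.univ).toReal :=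
        norm_integral_le_of_norm_le_const (Eventually.of_forall (by simpa using hC))
    _ = C := by simp

lemma TR_good (hM : IsMarkovOperator Φ) [TopologicalSpace X] [OpensMeasurableSpace X]
    (hSF : HasStrongFeller Φ) {g : X → ℝ} (hg : GoodR g) : GoodR (TR Φ g) := by
  obtain ⟨C, hC⟩ := hg.2
  exact ⟨(Complex.continuous_re.comp (hSF _ hg.coe.1 hg.coe.2)).measurable,
    C, fun x => TR_bound hM hg hC x⟩

lemma TR_cont [TopologicalSpace X] [OpensMeasurableSpace X]
    (hSF : HasStrongFeller Φ) {g : X → ℝ} (hg : GoodR g) : Continuous (TR Φ g) :=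
  Complex.continuous_re.comp (hSF _ hg.coe.1 hg.coe.2)

lemma TR_mono (hM : IsMarkovOperator Φ) {f g : X → ℝ} (hf : GoodR f) (hg : GoodR g)
    (h : ∀ y, f y ≤ g y) (x : X) : TR Φ f x ≤ TR Φ g x := by
  obtain ⟨P, hP, hrep, hTRf⟩ := TR_repr hM hf x
  have hTRg : TR Φ g x = ∫ y, g y ∂P := by
    have h1 : Φ (fun y => (g y : ℂ)) x = ∫ y, (g y : ℂ) ∂P :=
      hrep _ hg.coe.1 hg.coe.2
    rw [TR, h1, integral_cpx_ofReal, Complex.ofReal_re]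
  rw [hTRf, hTRg]
  exact integral_mono (hf.integrable P) (hg.integrable P) h

lemma TR_affine (hM : IsMarkovOperator Φ) {g : X → ℝ} (hg : GoodR g) (a b : ℝ) (x : X) :
    TR Φ (fun y => a + b * g y) x = a + b * TR Φ g x := by
  have hgood : GoodR (fun y => a + b * g y) := by
    obtain ⟨hm, C, hC⟩ := hg
    refine ⟨measurable_const.add (measurable_const.mul hm), |a| + |b| * C, fun y => ?_⟩
    calc |a + b * g y| ≤ |a| + |b * g y| := abs_add_le _ _
      _ = |a| + |b| * |g y| := by rw [abs_mul]
      _ ≤ |a| + |b| * C := by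
          have : |b| * |g y| ≤ |b| * C := mul_le_mul_of_nonneg_left (hC y) (abs_nonneg b)
          linarith
  obtain ⟨P, hP, hrep, hTR⟩ := TR_repr hM hgood x
  have hTRg : TR Φ g x = ∫ y, g y ∂P := by
    have h1 : Φ (fun y => (g y : ℂ)) x = ∫ y, (g y : ℂ) ∂P :=
      hrep _ hg.coe.1 hg.coe.2
    rw [TR, h1, integral_cpx_ofReal, Complex.ofReal_re]
  rw [hTR, hTRg]
  rw [integral_add (integrable_const a) ((hg.integrable P).const_mul b)]
  simp [integral_const_mul]

lemma TR_const (hM : IsMarkovOperator Φ) (c : ℝ) (x : X) : TR Φ (fun _ => c) x = c := by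
  have hgood : GoodR (fun _ : X => c) := ⟨measurable_const, |c|, fun _ => le_rfl⟩
  obtain ⟨P, hP, _, hTR⟩ := TR_repr hM hgood x
  rw [hTR]; simp

lemma Φ_add (hM : IsMarkovOperator Φ) {f g : X → ℂ} (hf : GoodC f) (hg : GoodC g)
    (x : X) : Φ (fun y => f y + g y) x = Φ f x + Φ g x := by
  obtain ⟨P, hP, hrep⟩ := hM x
  have hfg : GoodC (fun y => f y + g y) := by
    obtain ⟨hmf, Cf, hCf⟩ := hf
    obtain ⟨hmg, Cg, hCg⟩ := hg
    exact ⟨hmf.add hmg, Cf + Cg, fun y =>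
      (norm_add_le _ _).trans (add_le_add (hCf y) (hCg y))⟩
  rw [hrep _ hfg.1 hfg.2, hrep _ hf.1 hf.2, hrep _ hg.1 hg.2]
  exact integral_add (hf.integrable P) (hg.integrable P)

lemma Φ_norm_le (hM : IsMarkovOperator Φ) {f : X → ℂ} (hf : GoodC f) (x : X) :
    ‖Φ f x‖ ≤ TR Φ (fun y => ‖f y‖) x := by
  have hgood : GoodR (fun y => ‖f y‖) := by
    obtain ⟨hm, C, hC⟩ := hf
    exact ⟨hm.norm, C, fun y => by simpa [abs_of_nonneg (norm_nonneg _)] using hC y⟩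
  obtain ⟨P, hP, hrep, hTR⟩ := TR_repr hM hgood x
  rw [hrep _ hf.1 hf.2, hTR]
  exact norm_integral_le_integral_norm f

lemma Φ_good (hM : IsMarkovOperator Φ) [TopologicalSpace X] [OpensMeasurableSpace X]
    (hSF : HasStrongFeller Φ) {f : X → ℂ} (hf : GoodC f) : GoodC (Φ f) := by
  obtain ⟨C, hC⟩ := hf.2
  refine ⟨(hSF _ hf.1 hf.2).measurable, C, fun x => ?_⟩
  obtain ⟨P, hP, hrep⟩ := hM x
  rw [hrep _ hf.1 hf.2]
  calc ‖∫ y, f y ∂P‖ ≤ C * (P Set.univ).toReal :=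
        norm_integral_le_of_norm_le_const (Eventually.of_forall hC)
    _ = C := by simp

/-- Dominated convergence for `TR`. -/
lemma TR_tendsto (hM : IsMarkovOperator Φ) {g : ℕ → X → ℝ} {glim : X → ℝ} {M : ℝ}
    (hgn : ∀ n, GoodR (g n)) (hglim : GoodR glim) (hbd : ∀ n y, |g n y| ≤ M)
    (hpt : ∀ y, Tendsto (fun n => g n y) atTop (𝓝 (glim y))) (x : X) :
    Tendsto (fun n => TR Φ (g n) x) atTop (𝓝 (TR Φ glim x)) := by
  obtain ⟨P, hP, hrep, hTR⟩ := TR_repr hM hglim x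
  have hTRn : ∀ n, TR Φ (g n) x = ∫ y, g n y ∂P := by
    intro n
    have h1 : Φ (fun y => (g n y : ℂ)) x = ∫ y, (g n y : ℂ) ∂P :=
      hrep _ (hgn n).coe.1 (hgn n).coe.2
    rw [TR, h1, integral_cpx_ofReal, Complex.ofReal_re]
  simp only [hTRn, hTR]
  exact tendsto_integral_of_dominated_convergence (fun _ => M)
    (fun n => (hgn n).1.aestronglyMeasurable) (integrable_const M)
    (fun n => Eventually.of_forall (by simpa using hbd n))
    (Eventually.of_forall hpt)

end MarkovAux

/-- If `G ∈ C(K)` is the harmonic extension of `f ∈ C(∂U)` and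
`F ∈ C(K)` is any continuous extension of `f`, then `Φⁿ (F_U) → G_U`
uniformly on `U`. -/
theorem stmt1 {K : Type*} [MetricSpace K] [CompactSpace K]
    [MeasurableSpace K] [BorelSpace K]
    (U : Set K) (hUopen : IsOpen U) (hUdense : Dense U)
    (hbd : ∃ a b : K, a ∈ Uᶜ ∧ b ∈ Uᶜ ∧ a ≠ b)
    (Φ : (↥U → ℂ) → (↥U → ℂ))
    (hM : IsMarkovOperator Φ) (hSF : HasStrongFeller Φ)
    (hA : CondA U Φ) (hB : CondB U Φ)
    (f : C(↥(Uᶜ), ℂ)) (G : C(K, ℂ))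
    (hGfix : ∀ u : ↥U, Φ (fun v : ↥U => G v.1) u = G u.1)
    (hGf : ∀ x : ↥(Uᶜ), G x.1 = f x)
    (F : C(K, ℂ)) (hFf : ∀ x : ↥(Uᶜ), F x.1 = f x) :
    TendstoUniformly (fun n (u : ↥U) => Φ^[n] (fun v : ↥U => F v.1) u)
      (fun u : ↥U => G u.1) atTop := by
  classical
  obtain ⟨a, b, haU, hbU, hab⟩ := hbd
  -- restriction of continuous functions on `K` to `U` are bounded measurable
  have goodK : ∀ A : K → ℂ, Continuous A → GoodC (fun v : ↥U => A v.1) := by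
    intro A hA'
    refine ⟨(hA'.comp continuous_subtype_val).measurable, ?_⟩
    obtain ⟨C, hC⟩ := (isCompact_range hA'.norm).bddAbove
    exact ⟨C, fun y => hC (Set.mem_range_self y.1)⟩
  have goodKR : ∀ A : K → ℝ, Continuous A → GoodR (fun v : ↥U => A v.1) := by
    intro A hA'
    refine ⟨(hA'.comp continuous_subtype_val).measurable, ?_⟩
    obtain ⟨C, hC⟩ := (isCompact_range hA'.abs).bddAbove
    exact ⟨C, fun y => hC (Set.mem_range_self y.1)⟩
  -- the function p = ‖F - G‖ on K, vanishing on the boundary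
  set p : K → ℝ := fun y => ‖F y - G y‖ with hp_def
  have hpcont : Continuous p := (F.continuous.sub G.continuous).norm
  have hpnn : ∀ y, 0 ≤ p y := fun y => norm_nonneg _
  have hp0 : ∀ x ∈ Uᶜ, p x = 0 := by
    intro x hx
    simp only [hp_def, norm_eq_zero, sub_eq_zero]
    rw [hFf ⟨x, hx⟩, hGf ⟨x, hx⟩]
  obtain ⟨M0, hM0⟩ := (isCompact_range hpcont).bddAbove
  set M : ℝ := max M0 0 with hM_def
  have hMp : ∀ y, p y ≤ M := fun y =>
    le_trans (hM0 (Set.mem_range_self y)) (le_max_left _ _)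
  have hM0' : (0 : ℝ) ≤ M := le_max_right _ _
  -- the iteration scheme for the réduite q
  set qs : ℕ → ↥U → ℝ :=
    fun n => (fun (Q : ↥U → ℝ) (u : ↥U) => max (p u.1) (TR Φ Q u))^[n]
      (fun u : ↥U => p u.1) with hqs_def
  have hqs_zero : qs 0 = fun u : ↥U => p u.1 := rfl
  have hqs_succ : ∀ n, qs (n + 1) = fun u : ↥U => max (p u.1) (TR Φ (qs n) u) := by
    intro n
    simp only [hqs_def, Function.iterate_succ_apply']
  have hqs : ∀ n, Continuous (qs n) ∧ ∀ u, p u.1 ≤ qs n u ∧ qs n u ≤ M := by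
    intro n
    induction n with
    | zero =>
      rw [hqs_zero]
      exact ⟨hpcont.comp continuous_subtype_val, fun u => ⟨le_rfl, hMp _⟩⟩
    | succ n ih =>
      have hgood : GoodR (qs n) := by
        refine ⟨ih.1.measurable, M, fun u => ?_⟩
        have h1 := (ih.2 u).1
        have h2 := (ih.2 u).2
        have h3 := hpnn u.1
        rw [abs_le]; constructor <;> linarith
      rw [hqs_succ n]
      constructor
      · exact (hpcont.comp continuous_subtype_val).max (TR_cont hSF hgood)
      · intro u
        refine ⟨le_max_left _ _, max_le (hMp _) ?_⟩
        have hconstgood : GoodR (fun _ : ↥U => M) :=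
          ⟨measurable_const, |M|, fun _ => le_rfl⟩
        have := TR_mono hM hgood hconstgood (fun y => (ih.2 y).2) u
        rwa [TR_const hM M u] at this
  have hqs_good : ∀ n, GoodR (qs n) := by
    intro n
    refine ⟨(hqs n).1.measurable, M, fun u => ?_⟩
    have h1 := ((hqs n).2 u).1
    have h2 := ((hqs n).2 u).2
    have h3 := hpnn u.1
    rw [abs_le]; constructor <;> linarith
  have hqs_mono : ∀ n, ∀ u, qs n u ≤ qs (n + 1) u := by
    intro n
    induction n with
    | zero =>
      intro u
      rw [hqs_zero, hqs_succ 0]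
      exact le_max_left _ _
    | succ n ih =>
      intro u
      rw [hqs_succ n, hqs_succ (n + 1)]
      exact max_le_max le_rfl (TR_mono hM (hqs_good n) (hqs_good (n + 1)) ih u)
  have hqs_mono' : ∀ u, Monotone fun n => qs n u := by
    intro u
    exact monotone_nat_of_le_succ (fun n => hqs_mono n u)
  -- the réduite q
  set q : ↥U → ℝ := fun u => ⨆ n, qs n u with hq_def
  have hq_bddA : ∀ u, BddAbove (Set.range fun n => qs n u) := by
    intro u
    exact ⟨M, fun r ⟨n, hn⟩ => hn ▸ ((hqs n).2 u).2⟩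
  have hq_le : ∀ n u, qs n u ≤ q u := fun n u => le_ciSup (hq_bddA u) n
  have hq_ge_p : ∀ u, p u.1 ≤ q u := by
    intro u
    have := hq_le 0 u
    rwa [hqs_zero] at this
  have hq_le_M : ∀ u, q u ≤ M := fun u => ciSup_le (fun n => ((hqs n).2 u).2)
  have hq_nn : ∀ u, 0 ≤ q u := fun u => le_trans (hpnn u.1) (hq_ge_p u)
  have hq_good : GoodR q := by
    refine ⟨Measurable.iSup (fun n => (hqs n).1.measurable), M, fun u => ?_⟩
    rw [abs_le]
    exact ⟨by linarith [hq_nn u], hq_le_M u⟩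
  have hq_tendsto : ∀ u, Tendsto (fun n => qs n u) atTop (𝓝 (q u)) :=
    fun u => tendsto_atTop_ciSup (hqs_mono' u) (hq_bddA u)
  have hqs_absbd : ∀ n u, |qs n u| ≤ M := fun n u => by
    obtain ⟨_, C, hC⟩ := hqs_good n
    have h1 := ((hqs n).2 u).1
    have h2 := ((hqs n).2 u).2
    have h3 := hpnn u.1
    rw [abs_le]; constructor <;> linarith
  have hq_eq : ∀ u, q u = max (p u.1) (TR Φ q u) := by
    intro u
    have h1 : Tendsto (fun n => qs (n + 1) u) atTop (𝓝 (q u)) :=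
      (hq_tendsto u).comp (tendsto_add_atTop_nat 1)
    have h2 : Tendsto (fun n => max (p u.1) (TR Φ (qs n) u)) atTop
        (𝓝 (max (p u.1) (TR Φ q u))) :=
      tendsto_const_nhds.max (TR_tendsto hM hqs_good hq_good hqs_absbd hq_tendsto u)
    have h3 : (fun n => qs (n + 1) u) = fun n => max (p u.1) (TR Φ (qs n) u) := by
      funext n; rw [hqs_succ n]
    rw [h3] at h1
    exact tendsto_nhds_unique h1 h2
  have hq_cont : Continuous q := by
    have : q = fun u => max (p u.1) (TR Φ q u) := funext hq_eq
    rw [this]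
    exact (hpcont.comp continuous_subtype_val).max (TR_cont hSF hq_good)
  have hTq_le : ∀ u, TR Φ q u ≤ q u := by
    intro u
    rw [hq_eq u]
    exact le_max_right _ _
  -- the barrier construction at each boundary point
  have barrier : ∀ ε > (0:ℝ), ∀ x, x ∈ Uᶜ → ∃ (β : K → ℝ) (V : Set K),
      Continuous β ∧ IsOpen V ∧ x ∈ V ∧ (∀ y, p y ≤ β y) ∧ (∀ y ∈ V, β y ≤ 2 * ε) ∧
      (∀ u : ↥U, TR Φ (fun v : ↥U => β v.1) u ≤ β u.1) := by
    intro ε hε x hx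
    obtain ⟨h, hx0, hneg, hsub⟩ := hA x hx
    set η : K → ℝ := fun y => (h y).re with hη_def
    have hηcont : Continuous η := Complex.continuous_re.comp h.continuous
    have hηnonpos : ∀ y, η y ≤ 0 := by
      intro y
      by_cases hy : y = x
      · subst hy; simp [hη_def, hx0]
      · have := (Complex.lt_def.mp (hneg y hy)).1
        simpa [hη_def] using this.le
    have hηneg : ∀ y, y ≠ x → η y < 0 := by
      intro y hy
      have := (Complex.lt_def.mp (hneg y hy)).1
      simpa [hη_def] using this
    have him : ∀ y, (h y).im = 0 := by
      intro y
      by_cases hy : y = x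
      · subst hy; simp [hx0]
      · have := (Complex.lt_def.mp (hneg y hy)).2
        simpa using this
    have hcoe : (fun v : ↥U => h v.1) = fun v : ↥U => ((η v.1 : ℝ) : ℂ) := by
      funext v
      exact Complex.ext rfl (by simp [him v.1])
    have hηgood : GoodR (fun v : ↥U => η v.1) := goodKR η hηcont
    have hηsub : ∀ u : ↥U, η u.1 ≤ TR Φ (fun v : ↥U => η v.1) u := by
      intro u
      have h1 := hsub u
      rw [hcoe] at h1
      exact (Complex.le_def.mp h1).1
    by_cases hS : ∀ y, p y < ε
    · refine ⟨fun _ => ε, Set.univ, continuous_const, isOpen_univ, Set.mem_univ x,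
        fun y => (hS y).le, fun y _ => by linarith, fun u => ?_⟩
      rw [TR_const hM ε u]
    · push_neg at hS
      set S : Set K := p ⁻¹' Set.Ici ε with hS_def
      have hSclosed : IsClosed S := isClosed_Ici.preimage hpcont
      have hScompact : IsCompact S := hSclosed.isCompact
      have hSne : S.Nonempty := hS
      obtain ⟨y₀, hy₀S, hy₀max⟩ := hScompact.exists_isMaxOn hSne hηcont.continuousOn
      have hy₀ne : y₀ ≠ x := by
        intro hcontra
        have : ε ≤ p y₀ := hy₀S
        rw [hcontra, hp0 x hx] at this
        linarith
      set δ : ℝ := -η y₀ with hδ_def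
      have hδpos : 0 < δ := by
        have := hηneg y₀ hy₀ne
        simp only [hδ_def]; linarith
      set c : ℝ := M / δ with hc_def
      have hc0 : 0 ≤ c := div_nonneg hM0' hδpos.le
      refine ⟨fun y => ε + (-c) * η y, (fun y => c * η y) ⁻¹' Set.Ioi (-ε),
        continuous_const.add (continuous_const.mul hηcont),
        isOpen_Ioi.preimage (continuous_const.mul hηcont), ?_, ?_, ?_, ?_⟩
      · show c * η x ∈ Set.Ioi (-ε)
        have : η x = 0 := by simp [hη_def, hx0]
        simp [this]; linarith
      · intro y
        show p y ≤ ε + (-c) * η y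
        by_cases hy : ε ≤ p y
        · have hyS : y ∈ S := hy
          have h1 : η y ≤ η y₀ := hy₀max hyS
          have h2 : -η y ≥ δ := by simp only [hδ_def] at *; linarith
          have h3 : c * δ = M := div_mul_cancel₀ M hδpos.ne'
          have h4 : c * (-η y) ≥ c * δ := mul_le_mul_of_nonneg_left h2 hc0
          have h5 := hMp y
          nlinarith
        · push_neg at hy
          have h1 : c * η y ≤ 0 := mul_nonpos_of_nonneg_of_nonpos hc0 (hηnonpos y)
          nlinarith
      · intro y hy
        show ε + (-c) * η y ≤ 2 * ε
        have h1 : c * η y > -ε := hy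
        nlinarith
      · intro u
        have h1 : (fun v : ↥U => ε + (-c) * η v.1) =
            fun v : ↥U => ε + (-c) * (fun w : ↥U => η w.1) v := rfl
        rw [h1, show TR Φ (fun v : ↥U => ε + (-c) * (fun w : ↥U => η w.1) v) u
            = ε + (-c) * TR Φ (fun w : ↥U => η w.1) u from TR_affine hM hηgood ε (-c) u]
        have h2 := hηsub u
        show ε + (-c) * TR Φ (fun w : ↥U => η w.1) u ≤ ε + (-c) * η u.1
        nlinarith
  -- q is small near the boundary
  have qsmall : ∀ ε > (0:ℝ), ∃ W : Set K, IsOpen W ∧ Uᶜ ⊆ W ∧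
      ∀ u : ↥U, u.1 ∈ W → q u ≤ 2 * ε := by
    intro ε hε
    choose β V hβcont hVopen hxV hpβ hβV hβsub using
      fun x : ↥(Uᶜ) => barrier ε hε x.1 x.2
    have hcov : Uᶜ ⊆ ⋃ i : ↥(Uᶜ), V i := by
      intro x hx
      exact Set.mem_iUnion.mpr ⟨⟨x, hx⟩, hxV ⟨x, hx⟩⟩
    obtain ⟨t, ht⟩ := (hUopen.isClosed_compl.isCompact).elim_finite_subcover V hVopen hcov
    refine ⟨⋃ i ∈ t, V i, isOpen_biUnion (fun i _ => hVopen i), ht, ?_⟩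
    intro u hu
    obtain ⟨i, _, hiV⟩ := Set.mem_iUnion₂.mp hu
    have hβgood : GoodR (fun v : ↥U => β i v.1) := goodKR _ (hβcont i)
    have hqsβ : ∀ n, ∀ v : ↥U, qs n v ≤ β i v.1 := by
      intro n
      induction n with
      | zero =>
        intro v
        rw [hqs_zero]
        exact hpβ i v.1
      | succ n ih =>
        intro v
        rw [hqs_succ n]
        refine max_le (hpβ i v.1) ?_
        calc TR Φ (qs n) v ≤ TR Φ (fun w : ↥U => β i w.1) v :=
              TR_mono hM (hqs_good n) hβgood ih v
          _ ≤ β i v.1 := hβsub i v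
    have hqβ : q u ≤ β i u.1 := ciSup_le (fun n => hqsβ n u)
    exact hqβ.trans (hβV i u.1 hiV)
  -- the decreasing iterates of q
  set ws : ℕ → ↥U → ℝ := fun n => (TR Φ)^[n] q with hws_def
  have hws_zero : ws 0 = q := rfl
  have hws_succ : ∀ n, ws (n + 1) = TR Φ (ws n) := by
    intro n
    simp only [hws_def, Function.iterate_succ_apply']
  have hws : ∀ n, Continuous (ws n) ∧ ∀ u, 0 ≤ ws n u ∧ ws n u ≤ M := by
    intro n
    induction n with
    | zero =>
      rw [hws_zero]
      exact ⟨hq_cont, fun u => ⟨hq_nn u, hq_le_M u⟩⟩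
    | succ n ih =>
      have hgood : GoodR (ws n) := by
        refine ⟨ih.1.measurable, M, fun u => ?_⟩
        rw [abs_le]
        exact ⟨by linarith [(ih.2 u).1], (ih.2 u).2⟩
      rw [hws_succ n]
      refine ⟨TR_cont hSF hgood, fun u => ⟨?_, ?_⟩⟩
      · have h0good : GoodR (fun _ : ↥U => (0:ℝ)) := ⟨measurable_const, 0, by simp⟩
        have := TR_mono hM h0good hgood (fun y => (ih.2 y).1) u
        rwa [TR_const hM 0 u] at this
      · have hMgood : GoodR (fun _ : ↥U => M) := ⟨measurable_const, |M|, fun _ => le_rfl⟩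
        have := TR_mono hM hgood hMgood (fun y => (ih.2 y).2) u
        rwa [TR_const hM M u] at this
  have hws_good : ∀ n, GoodR (ws n) := by
    intro n
    refine ⟨(hws n).1.measurable, M, fun u => ?_⟩
    rw [abs_le]
    exact ⟨by linarith [((hws n).2 u).1], ((hws n).2 u).2⟩
  have hws_anti : ∀ n, ∀ u, ws (n + 1) u ≤ ws n u := by
    intro n
    induction n with
    | zero =>
      intro u
      rw [hws_succ 0, hws_zero]
      exact hTq_le u
    | succ n ih =>
      intro u
      calc ws (n + 2) u = TR Φ (ws (n + 1)) u := by rw [hws_succ (n + 1)]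
        _ ≤ TR Φ (ws n) u := TR_mono hM (hws_good (n + 1)) (hws_good n) ih u
        _ = ws (n + 1) u := by rw [hws_succ n]
  have hws_anti' : ∀ u, Antitone fun n => ws n u := by
    intro u
    exact antitone_nat_of_succ_le (fun n => hws_anti n u)
  have hws_le_q : ∀ n u, ws n u ≤ q u := by
    intro n u
    have h1 : ws n u ≤ ws 0 u := hws_anti' u (Nat.zero_le n)
    have h2 : ws 0 u = q u := congrFun hws_zero u
    linarith
  -- the limit w of the decreasing iterates
  set w : ↥U → ℝ := fun u => ⨅ n, ws n u with hw_def
  have hw_bddB : ∀ u, BddBelow (Set.range fun n => ws n u) :=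
    fun u => ⟨0, fun r ⟨n, hn⟩ => hn ▸ ((hws n).2 u).1⟩
  have hw_tendsto : ∀ u, Tendsto (fun n => ws n u) atTop (𝓝 (w u)) :=
    fun u => tendsto_atTop_ciInf (hws_anti' u) (hw_bddB u)
  have hw_nonneg : ∀ u, 0 ≤ w u :=
    fun u => le_ciInf (fun n => ((hws n).2 u).1)
  have hw_le : ∀ n u, w u ≤ ws n u := fun n u => ciInf_le (hw_bddB u) n
  have hw_good : GoodR w := by
    refine ⟨Measurable.iInf (fun n => (hws n).1.measurable), M, fun u => ?_⟩
    rw [abs_le]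
    exact ⟨by linarith [hw_nonneg u], le_trans (hw_le 0 u) (hq_le_M u)⟩
  have hws_absbd : ∀ n u, |ws n u| ≤ M := by
    intro n u
    rw [abs_le]
    exact ⟨by linarith [((hws n).2 u).1], ((hws n).2 u).2⟩
  have hTw : ∀ u, TR Φ w u = w u := by
    intro u
    have h1 : Tendsto (fun n => TR Φ (ws n) u) atTop (𝓝 (TR Φ w u)) :=
      TR_tendsto hM hws_good hw_good hws_absbd hw_tendsto u
    have h2 : (fun n => TR Φ (ws n) u) = fun n => ws (n + 1) u := by
      funext n; rw [hws_succ n]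
    rw [h2] at h1
    have h3 : Tendsto (fun n => ws (n + 1) u) atTop (𝓝 (w u)) :=
      (hw_tendsto u).comp (tendsto_add_atTop_nat 1)
    exact tendsto_nhds_unique h1 h3
  have hw_cont : Continuous w := by
    have : w = TR Φ w := funext (fun u => (hTw u).symm)
    rw [this]
    exact TR_cont hSF hw_good
  -- extend w by zero to all of K
  set wt : K → ℂ := fun y => if hy : y ∈ U then ((w ⟨y, hy⟩ : ℝ) : ℂ) else 0 with hwt_def
  have hwt_im : ∀ y, (wt y).im = 0 := by
    intro y
    simp only [hwt_def]
    split <;> simp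
  have hwtU : ∀ u : ↥U, wt u.1 = ((w u : ℝ) : ℂ) := by
    intro u
    simp only [hwt_def, dif_pos u.2]
  have hwt_bd : ∀ x ∈ Uᶜ, wt x = 0 := by
    intro x hx
    simp only [hwt_def, dif_neg hx]
  have hwt_cont : Continuous wt := by
    rw [continuous_iff_continuousAt]
    intro y
    by_cases hy : y ∈ U
    · have hrestr : ContinuousOn wt U := by
        rw [continuousOn_iff_continuous_restrict]
        have : U.restrict wt = fun u : ↥U => ((w u : ℝ) : ℂ) :=
          funext (fun u => hwtU u)
        exact (Complex.continuous_ofReal.comp hw_cont).congr (fun u => (hwtU u).symm)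
      exact hrestr.continuousAt (hUopen.mem_nhds hy)
    · have hwty : wt y = 0 := hwt_bd y hy
      rw [ContinuousAt, hwty, Metric.tendsto_nhds]
      intro ε hε
      obtain ⟨W, hWopen, hWsub, hWq⟩ := qsmall (ε / 5) (by positivity)
      filter_upwards [hWopen.mem_nhds (hWsub hy)] with z hz
      by_cases hzU : z ∈ U
      · rw [hwt_def]
        simp only [dif_pos hzU]
        have h1 : w ⟨z, hzU⟩ ≤ q ⟨z, hzU⟩ := le_trans (hw_le 0 _) (le_of_eq rfl)
        have h2 : q ⟨z, hzU⟩ ≤ 2 * (ε / 5) := hWq ⟨z, hzU⟩ hz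
        have h3 : 0 ≤ w ⟨z, hzU⟩ := hw_nonneg _
        rw [Complex.dist_eq]
        simp only [sub_zero, Complex.norm_real, Real.norm_eq_abs, abs_of_nonneg h3]
        linarith
      · rw [hwt_def]
        simp only [dif_neg hzU]
        simpa using hε
  -- the maximum principle forces w = 0
  have hw0 : ∀ u : ↥U, w u = 0 := by
    have hKne : Nonempty K := ⟨a⟩
    have hwtre_cont : Continuous fun y => (wt y).re :=
      Complex.continuous_re.comp hwt_cont
    obtain ⟨z, _, hz⟩ := isCompact_univ.exists_isMaxOn (Set.univ_nonempty)
      hwtre_cont.continuousOn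
    have hzmax : ∀ x : K, (wt x).re ≤ (wt z).re := fun x => hz (Set.mem_univ x)
    have hwtre_nonneg : ∀ u : ↥U, (wt u.1).re = w u := by
      intro u
      rw [hwtU u]; simp
    by_cases hzpos : 0 < (wt z).re
    · exfalso
      have hzU : z ∈ U := by
        by_contra hcontra
        rw [hwt_bd z hcontra] at hzpos
        simp at hzpos
      have hharm : ∀ u : ↥U, wt u.1 ≤ Φ (fun v : ↥U => wt v.1) u := by
        intro u
        have h1 : (fun v : ↥U => wt v.1) = fun v : ↥U => ((w v : ℝ) : ℂ) :=
          funext (fun v => hwtU v)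
        have h2 : Φ (fun v : ↥U => ((w v : ℝ) : ℂ)) u = ((w u : ℝ) : ℂ) := by
          rw [TR_coe hM hw_good]
          show ((TR Φ w u : ℝ) : ℂ) = ((w u : ℝ) : ℂ)
          rw [hTw u]
        rw [h1, h2, hwtU u]
      have hle : ∀ x : K, wt x ≤ wt z := by
        intro x
        rw [Complex.le_def]
        exact ⟨hzmax x, by rw [hwt_im, hwt_im]⟩
      have hconst := hB ⟨wt, hwt_cont⟩ hwt_im hharm ⟨z, hzU, hle⟩
      have h1 : wt a = wt z := hconst a z
      rw [hwt_bd a haU] at h1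
      rw [← h1] at hzpos
      simp at hzpos
    · push_neg at hzpos
      intro u
      have h1 : (wt u.1).re ≤ 0 := le_trans (hzmax u.1) hzpos
      rw [hwtre_nonneg u] at h1
      linarith [hw_nonneg u]
  -- iterates of Φ on d = F - G
  set d : ↥U → ℂ := fun v => F v.1 - G v.1 with hd_def
  have hd_good : GoodC d := goodK (fun y => F y - G y) (F.continuous.sub G.continuous)
  have hiter_good : ∀ n, GoodC (Φ^[n] d) := by
    intro n
    induction n with
    | zero => exact hd_good
    | succ n ih =>
      rw [Function.iterate_succ_apply']
      exact Φ_good hM hSF ih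
  have hiterF : ∀ n, ∀ u : ↥U, Φ^[n] (fun v : ↥U => F v.1) u = Φ^[n] d u + G u.1 := by
    intro n
    induction n with
    | zero =>
      intro u
      simp [hd_def]
    | succ n ih =>
      intro u
      rw [Function.iterate_succ_apply', Function.iterate_succ_apply']
      have hfn : (Φ^[n] fun v : ↥U => F v.1) = fun v : ↥U => Φ^[n] d v + G v.1 :=
        funext ih
      rw [hfn]
      have hGgood : GoodC (fun v : ↥U => G v.1) := goodK G G.continuous
      have := Φ_add hM (hiter_good n) hGgood u
      rw [this, hGfix u]
  have hiter_bd : ∀ n, ∀ u : ↥U, ‖Φ^[n] d u‖ ≤ ws n u := by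
    intro n
    induction n with
    | zero =>
      intro u
      rw [hws_zero]
      exact le_trans (le_of_eq rfl) (hq_ge_p u)
    | succ n ih =>
      intro u
      rw [Function.iterate_succ_apply', hws_succ n]
      have hnormgood : GoodR (fun y : ↥U => ‖Φ^[n] d y‖) := by
        obtain ⟨hm, C, hC⟩ := hiter_good n
        exact ⟨hm.norm, C, fun y => by simpa [abs_of_nonneg (norm_nonneg _)] using hC y⟩
      calc ‖Φ (Φ^[n] d) u‖ ≤ TR Φ (fun y : ↥U => ‖Φ^[n] d y‖) u :=
            Φ_norm_le hM (hiter_good n) u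
        _ ≤ TR Φ (ws n) u := TR_mono hM hnormgood (hws_good n) ih u
  -- final assembly
  rw [Metric.tendstoUniformly_iff]
  intro ε hε
  obtain ⟨W, hWopen, hWsub, hWq⟩ := qsmall (ε / 5) (by positivity)
  set O : ℕ → Set K := fun n => W ∪ (Subtype.val '' (ws n ⁻¹' Set.Iio (ε / 5)))
    with hO_def
  have hOopen : ∀ n, IsOpen (O n) :=
    fun n => hWopen.union (hUopen.isOpenMap_subtype_val _
      (isOpen_Iio.preimage (hws n).1))
  have hOmono : ∀ m n, m ≤ n → O m ⊆ O n := by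
    intro m n hmn y hy
    rcases hy with hy | ⟨u, hu, huy⟩
    · exact Or.inl hy
    · exact Or.inr ⟨u, lt_of_le_of_lt (hws_anti' u hmn) hu, huy⟩
  have hcover : Set.univ ⊆ ⋃ n, O n := by
    intro y _
    by_cases hyW : y ∈ W
    · exact Set.mem_iUnion.mpr ⟨0, Or.inl hyW⟩
    · have hyU : y ∈ U := by
        by_contra hcontra
        exact hyW (hWsub hcontra)
      set u : ↥U := ⟨y, hyU⟩
      have h1 : Tendsto (fun n => ws n u) atTop (𝓝 0) := by
        have := hw_tendsto u
        rwa [hw0 u] at this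
      have h2 : ∀ᶠ n in atTop, ws n u < ε / 5 :=
        h1.eventually_lt_const (by positivity)
      obtain ⟨n, hn⟩ := h2.exists
      exact Set.mem_iUnion.mpr ⟨n, Or.inr ⟨u, hn, rfl⟩⟩
  obtain ⟨t, ht⟩ := isCompact_univ.elim_finite_subcover O hOopen hcover
  set N : ℕ := t.sup id with hN_def
  have hON : Set.univ ⊆ O N := by
    intro y hy
    obtain ⟨i, hit, hyi⟩ := Set.mem_iUnion₂.mp (ht hy)
    exact hOmono i N (Finset.le_sup (f := id) hit) hyi
  rw [eventually_atTop]
  refine ⟨N, fun n hn u => ?_⟩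
  have hkey : ‖Φ^[n] d u‖ < ε := by
    have hmem : u.1 ∈ O N := hON (Set.mem_univ u.1)
    rcases hmem with hmem | ⟨v, hv, hvu⟩
    · have h1 : ws n u ≤ q u := hws_le_q n u
      have h2 : q u ≤ 2 * (ε / 5) := hWq u hmem
      have h3 := hiter_bd n u
      linarith
    · have hv_eq : v = u := Subtype.ext hvu
      rw [hv_eq] at hv
      have h1 : ws n u ≤ ws N u := hws_anti' u hn
      have h3 := hiter_bd n u
      have hv' : ws N u < ε / 5 := hv
      linarith
  rw [hiterF n u, dist_eq_norm]
  have : G u.1 - (Φ^[n] d u + G u.1) = -(Φ^[n] d u) := by ring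
  rw [this, norm_neg]
  exact hkey
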